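/- Let A ∈ ℤ^{m×n} of rank m, B ⊆ A invertible with Γ = B·ℤ^m, γ the gcd of the m×m minors of A, and δ the maximum absolute value of an m×m minor of A. If z ∈ ℤ^n_{≥0} satisfies that no w with 0 ≤ w ⪇ z has A w ≡ A z (mod Γ), then ‖B⁻¹ A z‖_∞ ≤ ‖B⁻¹A‖_∞ · ‖z‖₁ < γ⁻¹ · δ. -/

import Mathlib

section helpers

open Matrix in
lemma det_mul_eq_sum_minors {m n : Type*} [Fintype m] [Fintype n] [DecidableEq m]
    {R : Type*} [CommRing R] (P : Matrix m n R) (Q : Matrix n m R) :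
    (P * Q).det = ∑ φ : m → n, (∏ i, P i (φ i)) * (Q.submatrix φ id).det := by
  have h2 := (Matrix.detRowAlternating (R := R) (n := m)).toMultilinearMap.map_sum
    (g := fun (i : m) (k : n) => P i k • Q k)
  have h1 : (P * Q).det = Matrix.detRowAlternating (fun i => ∑ k : n, P i k • Q k) := by
    congr 1
    ext i j
    simp [Matrix.mul_apply]
  rw [h1]
  rw [show (Matrix.detRowAlternating (fun i => ∑ k : n, P i k • Q k) : R)
      = (Matrix.detRowAlternating (R := R) (n := m)).toMultilinearMap
          (fun i => ∑ k : n, P i k • Q k) from rfl, h2]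
  refine Finset.sum_congr rfl fun φ _ => ?_
  rw [MultilinearMap.map_smul_univ]
  simp only [smul_eq_mul]
  congr 1

lemma mulVecLin_injective_of_det_ne_zero {m : ℕ} (W : Matrix (Fin m) (Fin m) ℤ)
    (hW : W.det ≠ 0) : Function.Injective W.mulVecLin := by
  intro x y hxy
  simp only [Matrix.mulVecLin_apply] at hxy
  have h1 : W.adjugate.mulVec (W.mulVec x) = W.adjugate.mulVec (W.mulVec y) := by rw [hxy]
  rw [Matrix.mulVec_mulVec, Matrix.mulVec_mulVec, Matrix.adjugate_mul,
    Matrix.smul_mulVec, Matrix.smul_mulVec, Matrix.one_mulVec,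
    Matrix.one_mulVec] at h1
  funext i
  have := congrFun h1 i
  simp only [Pi.smul_apply, smul_eq_mul] at this
  exact mul_left_cancel₀ hW this

lemma index_range_mulVecLin {m : ℕ} (W : Matrix (Fin m) (Fin m) ℤ) (hW : W.det ≠ 0) :
    (LinearMap.range W.mulVecLin).toAddSubgroup.index = W.det.natAbs := by
  have hinj := mulVecLin_injective_of_det_ne_zero W hW
  set N := LinearMap.range W.mulVecLin with hN
  obtain ⟨r, snf⟩ := Submodule.smithNormalForm (Pi.basisFun ℤ (Fin m)) N
  let e1 : (Fin m → ℤ) ≃ₗ[ℤ] N := LinearEquiv.ofInjective W.mulVecLin hinj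
  have hrm : r = m := by
    have h1 : Module.finrank ℤ N = r := by
      rw [Module.finrank_eq_card_basis snf.bN, Fintype.card_fin]
    have h2 : Module.finrank ℤ N = m := by
      rw [← e1.finrank_eq]
      simp
    omega
  subst hrm
  have hσb : Function.Bijective snf.f := Finite.injective_iff_bijective.mp snf.f.injective
  let σ : Equiv.Perm (Fin r) := Equiv.ofBijective snf.f hσb
  have hidx : N.toAddSubgroup.index = ∏ i, (snf.a i).natAbs := by
    rw [snf.toAddSubgroup_index_eq_pow_mul_prod]
    simp [Ideal.span_singleton_toAddSubgroup_eq_zmultiples, Int.index_zmultiples]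
  let e2 : (Fin r → ℤ) ≃ₗ[ℤ] N := snf.bN.equivFun.symm
  have hdet1 : W.det = LinearMap.det (N.subtype ∘ₗ (e1 : (Fin r → ℤ) →ₗ[ℤ] N)) := by
    have h : N.subtype ∘ₗ (e1 : (Fin r → ℤ) →ₗ[ℤ] N) = W.mulVecLin := by
      ext x; rfl
    rw [h]
    have h2 : W.mulVecLin = Matrix.toLin' W := by
      ext x; simp [Matrix.toLin'_apply, Matrix.mulVecLin_apply]
    rw [h2, LinearMap.det_toLin']
  have hassoc := LinearMap.associated_det_comp_equiv (N.subtype) e1 e2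
  have hnat : W.det.natAbs = (LinearMap.det (N.subtype ∘ₗ (e2 : (Fin r → ℤ) →ₗ[ℤ] N))).natAbs := by
    rw [hdet1]
    exact (Int.natAbs_eq_iff_associated.mpr hassoc)
  set φ : (Fin r → ℤ) →ₗ[ℤ] (Fin r → ℤ) :=
    (N.subtype ∘ₗ (e2 : (Fin r → ℤ) →ₗ[ℤ] N)) with hφ
  set ψ : (Fin r → ℤ) →ₗ[ℤ] (Fin r → ℤ) :=
    (snf.bM.equivFun : (Fin r → ℤ) →ₗ[ℤ] (Fin r → ℤ)) ∘ₗ φ with hψ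
  have hψφ : (LinearMap.det ψ).natAbs = (LinearMap.det φ).natAbs := by
    rw [hψ, LinearMap.det_comp, Int.natAbs_mul]
    have hu : IsUnit (LinearMap.det ((snf.bM.equivFun :
        (Fin r → ℤ) ≃ₗ[ℤ] (Fin r → ℤ)) : (Fin r → ℤ) →ₗ[ℤ] (Fin r → ℤ))) :=
      LinearEquiv.isUnit_det' _
    rcases Int.isUnit_iff.mp hu with h | h <;> rw [h] <;> simp
  have hMt : LinearMap.toMatrix (Pi.basisFun ℤ (Fin r)) (Pi.basisFun ℤ (Fin r)) ψ
      = (Matrix.diagonal snf.a).submatrix σ.symm id := by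
    ext i j
    rw [LinearMap.toMatrix_apply]
    have hbj : (Pi.basisFun ℤ (Fin r)) j = Pi.single j 1 := by
      simp [Pi.basisFun_apply]
    have he2 : e2 (Pi.single j 1) = snf.bN j := by
      show snf.bN.equivFun.symm (Pi.single j 1) = snf.bN j
      rw [Module.Basis.equivFun_symm_apply]
      simp [Pi.single_apply]
    have hφj : φ (Pi.single j 1) = snf.a j • snf.bM (snf.f j) := by
      show N.subtype (e2 (Pi.single j 1)) = _
      rw [he2]
      exact snf.snf j
    rw [hbj]
    show (Pi.basisFun ℤ (Fin r)).repr (snf.bM.equivFun (φ (Pi.single j 1))) i = _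
    rw [hφj]
    simp only [Pi.basisFun_repr, Module.Basis.equivFun_apply, map_smul, Module.Basis.repr_self]
    have hσj : σ j = snf.f j := rfl
    by_cases h : snf.f j = i
    · have h1 : σ.symm i = j := by rw [← h, ← hσj]; exact σ.symm_apply_apply j
      simp [h, h1, Matrix.submatrix_apply, Matrix.diagonal_apply, Finsupp.single_apply]
    · have h1 : σ.symm i ≠ j := by
        intro hc
        apply h
        rw [← hσj, ← hc, σ.apply_symm_apply]
      simp [Matrix.submatrix_apply, Matrix.diagonal_apply, h1, Finsupp.single_apply, h]
  have hdetψ : (LinearMap.det ψ).natAbs = ∏ i, (snf.a i).natAbs := by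
    rw [← LinearMap.det_toMatrix (Pi.basisFun ℤ (Fin r)), hMt]
    rw [show ((Matrix.diagonal snf.a).submatrix (⇑σ.symm) id) =
      ((Matrix.diagonal snf.a).submatrix (⇑(σ.symm : Equiv.Perm (Fin r))) id) from rfl]
    rw [Matrix.det_permute, Int.natAbs_mul, Matrix.det_diagonal]
    rcases Int.units_eq_one_or (Equiv.Perm.sign (Equiv.symm σ)) with h | h <;>
      rw [h] <;>
      simp [Int.natAbs_mul] <;>
      exact map_prod Int.natAbsHom snf.a Finset.univ

  rw [hidx, hnat, ← hψφ, hdetψ]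

lemma chain_exists {n : ℕ} (z : Fin n → ℤ) (hz : 0 ≤ z) :
    ∃ c : ℕ → (Fin n → ℤ),
      (∀ t, 0 ≤ c t) ∧ (∀ t, c t ≤ z) ∧ (∀ t t', t ≤ t' → c t ≤ c t') ∧
      (∀ t : ℕ, (t : ℤ) ≤ ∑ j, z j → ∑ j, c t j = (t : ℤ)) := by
  set y : ℕ → ℤ := fun k => if h : k < n then z ⟨k, h⟩ else 0 with hy
  set S : ℕ → ℤ := fun k => ∑ j ∈ Finset.range k, y j with hS
  have hy0 : ∀ k, 0 ≤ y k := by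
    intro k
    rw [hy]
    by_cases h : k < n
    · simpa [h] using hz ⟨k, h⟩
    · simp [h]
  have hS0 : ∀ k, 0 ≤ S k := fun k => Finset.sum_nonneg fun j _ => hy0 j
  refine ⟨fun t j => min (z j) (max ((t : ℤ) - S j.val) 0), ?_, ?_, ?_, ?_⟩
  · intro t j
    exact le_min (hz j) (le_max_right _ _)
  · intro t j
    exact min_le_left _ _
  · intro t t' h j
    have h' : (t : ℤ) ≤ (t' : ℤ) := by exact_mod_cast h
    exact min_le_min le_rfl (max_le_max (sub_le_sub_right h' _) le_rfl)
  · intro t ht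
    have key : ∀ j : Fin n, min (z j) (max ((t:ℤ) - S j.val) 0)
        = min (t:ℤ) (S (j.val+1)) - min (t:ℤ) (S j.val) := by
      intro j
      have h1 : S (j.val + 1) = S j.val + z j := by
        rw [hS]
        simp only [Finset.sum_range_succ]
        congr 1
        simp [hy, j.isLt]
      have h2 := hS0 j.val
      have h3 : (0:ℤ) ≤ z j := hz j
      rw [h1]
      generalize S j.val = sv at h2 ⊢
      generalize hzz : z j = a at h3 ⊢
      simp only [min_def, max_def]
      split_ifs <;> omega
    rw [Finset.sum_congr rfl (fun j _ => key j)]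
    rw [show (∑ j : Fin n, (min (t:ℤ) (S (j.val+1)) - min (t:ℤ) (S j.val)))
        = ∑ k ∈ Finset.range n, (min (t:ℤ) (S (k+1)) - min (t:ℤ) (S k)) from
      Fin.sum_univ_eq_sum_range (fun k => min (t:ℤ) (S (k+1)) - min (t:ℤ) (S k)) n]
    rw [Finset.sum_range_sub (fun k => min (t:ℤ) (S k)) n]
    have hSn : S n = ∑ j, z j := by
      show (∑ j ∈ Finset.range n, y j) = _
      rw [← Fin.sum_univ_eq_sum_range y n]
      refine Finset.sum_congr rfl fun j _ => ?_
      simp [hy, j.isLt]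
    have hS0' : S 0 = 0 := by simp [hS]
    rw [hSn, hS0']
    have ht0 : (0 : ℤ) ≤ (t : ℤ) := Int.natCast_nonneg t
    generalize (∑ j, z j) = tot at ht ⊢
    simp only [min_def, max_def]
    split_ifs <;> omega

end helpers

/-- If `z ∈ ℤⁿ_{≥0}` has no `w` with `0 ≤ w ⪇ z` and `A w ≡ A z (mod Γ)`,
where `Γ = B·ℤᵐ` for an invertible submatrix `B = A_g`, then
`‖B⁻¹ A z‖_∞ ≤ ‖B⁻¹A‖_∞ · ‖z‖₁ < γ⁻¹·δ`. -/
theorem stmt5 (m n : ℕ) [NeZero m] [NeZero n]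
    (A : Matrix (Fin m) (Fin n) ℤ) (hA : A.rank = m)
    (g : Fin m → Fin n) (hg : Function.Injective g)
    (hB : (A.submatrix id g).det ≠ 0)
    (z : Fin n → ℤ) (hz : 0 ≤ z)
    (hmin : ∀ w : Fin n → ℤ, 0 ≤ w → w ≤ z → w ≠ z →
      A.mulVec w - A.mulVec z ∉ LinearMap.range (A.submatrix id g).mulVecLin) :
    (∀ i, |((((A.submatrix id g).map (Int.cast : ℤ → ℚ))⁻¹ *
            A.map (Int.cast : ℤ → ℚ)).mulVec (fun j => (z j : ℚ))) i| ≤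
        (Finset.univ.sup' Finset.univ_nonempty (fun p : Fin m × Fin n =>
            |((((A.submatrix id g).map (Int.cast : ℤ → ℚ))⁻¹ *
                A.map (Int.cast : ℤ → ℚ)) p.1 p.2)|)) *
          ∑ j, (z j : ℚ)) ∧
    (Finset.univ.sup' Finset.univ_nonempty (fun p : Fin m × Fin n =>
        |((((A.submatrix id g).map (Int.cast : ℤ → ℚ))⁻¹ *
            A.map (Int.cast : ℤ → ℚ)) p.1 p.2)|)) *
        ∑ j, (z j : ℚ) <
      ((Finset.univ.sup (fun g' : Fin m → Fin n =>
          (A.submatrix id g').det.natAbs) : ℕ) : ℚ) /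
        ((Finset.univ.gcd (fun g' : Fin m → Fin n =>
          (A.submatrix id g').det.natAbs) : ℕ) : ℚ) := by
  classical
  have hzj : ∀ j, (0:ℤ) ≤ z j := fun j => hz j
  set Aq : Matrix (Fin m) (Fin n) ℚ := A.map (Int.cast : ℤ → ℚ) with hAq
  set Bq : Matrix (Fin m) (Fin m) ℚ := (A.submatrix id g).map (Int.cast : ℤ → ℚ) with hBqd
  set M : Matrix (Fin m) (Fin n) ℚ := Bq⁻¹ * Aq with hMdef
  set s : ℚ := Finset.univ.sup' Finset.univ_nonempty
    (fun p : Fin m × Fin n => |M p.1 p.2|) with hsdef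
  set δn : ℕ := Finset.univ.sup
    (fun g' : Fin m → Fin n => (A.submatrix id g').det.natAbs) with hδd
  set γn : ℕ := Finset.univ.gcd
    (fun g' : Fin m → Fin n => (A.submatrix id g').det.natAbs) with hγd
  have hzq : ∀ j, (0:ℚ) ≤ (z j : ℚ) := fun j => by exact_mod_cast hzj j
  -- determinant of Bq
  have hBqdet : Bq.det = (((A.submatrix id g).det : ℤ) : ℚ) := by
    rw [hBqd, show (A.submatrix id g).map (Int.cast : ℤ → ℚ)
      = (Int.castRingHom ℚ).mapMatrix (A.submatrix id g) from rfl]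
    exact ((Int.castRingHom ℚ).map_det _).symm
  -- entries of M via Cramer's rule
  have hMent : ∀ i j, M i j =
      (((A.submatrix id (Function.update g i j)).det : ℤ) : ℚ) /
        (((A.submatrix id g).det : ℤ) : ℚ) := by
    intro i j
    rw [hMdef, Matrix.inv_def, Matrix.smul_mul, Matrix.smul_apply]
    have hadj : (Bq.adjugate * Aq) i j = (Bq.updateCol i (fun k => Aq k j)).det := by
      rw [Matrix.mul_apply]
      rw [show ∑ k, Bq.adjugate i k * Aq k j = Bq.adjugate.mulVec (fun k => Aq k j) i from rfl]
      rw [← Matrix.cramer_eq_adjugate_mulVec, Matrix.cramer_apply]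
    rw [hadj]
    have hupd : Bq.updateCol i (fun k => Aq k j)
        = (A.submatrix id (Function.update g i j)).map (Int.cast : ℤ → ℚ) := by
      ext p q
      rw [Matrix.updateCol_apply]
      by_cases h : q = i <;>
        simp [h, hBqd, hAq, Function.update, Matrix.submatrix_apply]
    rw [hupd, hBqdet]
    rw [show ((A.submatrix id (Function.update g i j)).map (Int.cast : ℤ → ℚ)).det
      = (((A.submatrix id (Function.update g i j)).det : ℤ) : ℚ) by
        rw [show (A.submatrix id (Function.update g i j)).map (Int.cast : ℤ → ℚ)
          = (Int.castRingHom ℚ).mapMatrix (A.submatrix id (Function.update g i j)) from rfl]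
        exact ((Int.castRingHom ℚ).map_det _).symm]
    rw [Ring.inverse_eq_inv', smul_eq_mul, inv_mul_eq_div]
  constructor
  · -- Part 1
    intro i
    have h1 : (M.mulVec fun j => (z j:ℚ)) i = ∑ j, M i j * (z j:ℚ) := rfl
    rw [h1]
    calc |∑ j, M i j * (z j:ℚ)| ≤ ∑ j, |M i j * (z j:ℚ)| := Finset.abs_sum_le_sum_abs _ _
      _ = ∑ j, |M i j| * (z j:ℚ) := by
          refine Finset.sum_congr rfl fun j _ => ?_
          rw [abs_mul, abs_of_nonneg (hzq j)]
      _ ≤ ∑ j, s * (z j:ℚ) := by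
          refine Finset.sum_le_sum fun j _ => mul_le_mul_of_nonneg_right ?_ (hzq j)
          exact Finset.le_sup' (f := fun p : Fin m × Fin n => |M p.1 p.2|)
            (Finset.mem_univ (i, j))
      _ = s * ∑ j, (z j:ℚ) := (Finset.mul_sum _ _ _).symm
  · -- Part 2
    -- ℤ-side lattice setup
    have hΓL : LinearMap.range (A.submatrix id g).mulVecLin ≤ LinearMap.range A.mulVecLin := by
      rintro x ⟨v, rfl⟩
      refine ⟨fun j => ∑ i, if g i = j then v i else 0, ?_⟩
      show A.mulVec _ = (A.submatrix id g).mulVec v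
      funext i'
      simp only [Matrix.mulVec, dotProduct, Matrix.submatrix_apply, id]
      calc ∑ j, A i' j * (∑ i, if g i = j then v i else 0)
          = ∑ j, ∑ i, (if g i = j then A i' j * v i else 0) := by
            refine Finset.sum_congr rfl fun j _ => ?_
            rw [Finset.mul_sum]
            exact Finset.sum_congr rfl fun i _ => by rw [mul_ite, mul_zero]
        _ = ∑ i, ∑ j, (if g i = j then A i' j * v i else 0) := Finset.sum_comm
        _ = ∑ i, A i' (g i) * v i := by
            refine Finset.sum_congr rfl fun i _ => ?_
            simp
    have hBinjZ := mulVecLin_injective_of_det_ne_zero (A.submatrix id g) hB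
    obtain ⟨nb, bL⟩ := Submodule.basisOfPid (Pi.basisFun ℤ (Fin m)) (LinearMap.range A.mulVecLin)
    have hnb' : nb = m := by
      have h1 : Module.finrank ℤ (LinearMap.range A.mulVecLin) = nb := by
        rw [Module.finrank_eq_card_basis bL, Fintype.card_fin]
      have h2 : Module.finrank ℤ (LinearMap.range (A.submatrix id g).mulVecLin) = m := by
        rw [← (LinearEquiv.ofInjective _ hBinjZ).finrank_eq]
        simp
      have h3 : Module.finrank ℤ (LinearMap.range A.mulVecLin)
          ≤ Module.finrank ℤ (Fin m → ℤ) := Submodule.finrank_le _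
      have h4 : Module.finrank ℤ (LinearMap.range (A.submatrix id g).mulVecLin)
          ≤ Module.finrank ℤ (LinearMap.range A.mulVecLin) := by
        exact LinearMap.finrank_le_finrank_of_injective
          (Submodule.inclusion_injective hΓL)
      have h5 : Module.finrank ℤ (Fin m → ℤ) = m := by simp
      omega
    have hnb : m = nb := hnb'.symm
    subst hnb
    -- the matrix C whose columns are the basis of L
    set C : Matrix (Fin m) (Fin m) ℤ := Matrix.of (fun i j => (bL j : Fin m → ℤ) i) with hCd
    have hCmul : ∀ v : Fin m → ℤ, C.mulVec v = ∑ j, v j • (bL j : Fin m → ℤ) := by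
      intro v
      funext i
      simp only [Matrix.mulVec, dotProduct, hCd, Matrix.of_apply,
        Finset.sum_apply, Pi.smul_apply, smul_eq_mul]
      exact Finset.sum_congr rfl fun j _ => mul_comm _ _
    have hLC : LinearMap.range A.mulVecLin = LinearMap.range C.mulVecLin := by
      ext x
      constructor
      · intro hx
        refine ⟨fun j => bL.repr ⟨x, hx⟩ j, ?_⟩
        rw [Matrix.mulVecLin_apply, hCmul]
        have h := bL.sum_repr ⟨x, hx⟩
        calc (∑ j, bL.repr ⟨x, hx⟩ j • (bL j : Fin m → ℤ))
            = ((∑ j, bL.repr ⟨x, hx⟩ j • bL j : LinearMap.range A.mulVecLin) : Fin m → ℤ) := by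
              push_cast
              rfl
          _ = x := by rw [h]
      · rintro ⟨v, rfl⟩
        rw [Matrix.mulVecLin_apply, hCmul]
        exact Submodule.sum_mem _ fun j _ => Submodule.smul_mem _ _ (bL j).2
    have hcolA : ∀ k : Fin n, (fun i => A i k) ∈ LinearMap.range A.mulVecLin := by
      intro k
      refine ⟨Pi.single k 1, ?_⟩
      funext i
      simp [Matrix.mulVecLin_apply, Matrix.mulVec, dotProduct, Pi.single_apply]
    set Y : Matrix (Fin m) (Fin n) ℤ :=
      Matrix.of (fun p k => bL.repr ⟨fun i => A i k, hcolA k⟩ p) with hYd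
    have hAY : A = C * Y := by
      ext i k
      rw [Matrix.mul_apply]
      have h := bL.sum_repr ⟨fun i => A i k, hcolA k⟩
      have h2 := congrFun (congrArg (Subtype.val) h) i
      simp only [Submodule.coe_sum, Finset.sum_apply, Submodule.coe_smul,
        Pi.smul_apply, smul_eq_mul] at h2
      rw [← h2]
      refine Finset.sum_congr rfl fun p _ => ?_
      rw [hCd, hYd]
      simp only [Matrix.of_apply]
      exact mul_comm _ _
    have hsub : ∀ g' : Fin m → Fin n, A.submatrix id g' = C * (Y.submatrix id g') := by
      intro g'
      ext i j
      rw [Matrix.submatrix_apply, Matrix.mul_apply, hAY, Matrix.mul_apply]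
      exact Finset.sum_congr rfl fun p _ => rfl
    have hdetB : (A.submatrix id g).det = C.det * (Y.submatrix id g).det := by
      rw [hsub g, Matrix.det_mul]
    have hdetC0 : C.det ≠ 0 := fun h => hB (by rw [hdetB, h, zero_mul])
    have hCinj := mulVecLin_injective_of_det_ne_zero C hdetC0
    have hYsurj : ∀ v : Fin m → ℤ, ∃ x : Fin n → ℤ, Y.mulVec x = v := by
      intro v
      have hxL : C.mulVec v ∈ LinearMap.range A.mulVecLin := by
        rw [hLC]
        exact ⟨v, rfl⟩
      obtain ⟨x, hx⟩ := hxL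
      rw [Matrix.mulVecLin_apply] at hx
      refine ⟨x, hCinj ?_⟩
      rw [Matrix.mulVecLin_apply, Matrix.mulVecLin_apply, Matrix.mulVec_mulVec, ← hAY]
      exact hx
    -- right inverse of Y
    choose Xf hXf using hYsurj
    set X : Matrix (Fin n) (Fin m) ℤ := Matrix.of (fun k i => Xf (Pi.single i 1) k) with hXd
    have hYX : Y * X = 1 := by
      ext p i
      rw [Matrix.mul_apply]
      have hh := congrFun (hXf (Pi.single i 1)) p
      rw [show (∑ k, Y p k * X k i) = Y.mulVec (Xf (Pi.single i 1)) p from rfl, hh]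
      simp [Pi.single_apply, Matrix.one_apply]
    -- gcd of the maximal minors of Y is 1
    have hgcdY : Finset.univ.gcd
        (fun g' : Fin m → Fin n => (Y.submatrix id g').det.natAbs) = 1 := by
      set γY := Finset.univ.gcd
        (fun g' : Fin m → Fin n => (Y.submatrix id g').det.natAbs) with hγY
      have h1 : (1 : ℤ) = ∑ φ : Fin m → Fin n,
          (∏ i, X.transpose i (φ i)) * (Y.submatrix id φ).det := by
        have h2 : (X.transpose * Y.transpose).det = (1:ℤ) := by
          rw [← Matrix.transpose_mul, hYX]
          simp
        rw [← h2, det_mul_eq_sum_minors]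
        refine Finset.sum_congr rfl fun φ _ => ?_
        congr 1
        rw [← Matrix.det_transpose (Y.submatrix id φ), Matrix.transpose_submatrix]
      have hdvd : (γY : ℤ) ∣ 1 := by
        rw [h1]
        refine Finset.dvd_sum fun φ _ => Dvd.dvd.mul_left ?_ _
        have hn : γY ∣ ((Y.submatrix id φ).det).natAbs := Finset.gcd_dvd (Finset.mem_univ φ)
        exact dvd_trans (Int.natCast_dvd_natCast.mpr hn) (Int.natAbs_dvd.mpr dvd_rfl)
      have hd2 : γY ∣ 1 := by exact_mod_cast hdvd
      exact Nat.dvd_one.mp hd2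
    -- γn = |det C|
    have hγC : γn = C.det.natAbs := by
      rw [hγd]
      calc Finset.univ.gcd (fun g' : Fin m → Fin n => (A.submatrix id g').det.natAbs)
          = Finset.univ.gcd (fun g' : Fin m → Fin n =>
              C.det.natAbs * (Y.submatrix id g').det.natAbs) := by
            refine Finset.gcd_congr rfl fun g' _ => ?_
            rw [hsub g', Matrix.det_mul, Int.natAbs_mul]
        _ = C.det.natAbs * Finset.univ.gcd
              (fun g' : Fin m → Fin n => (Y.submatrix id g').det.natAbs) := by
            rw [Finset.gcd_mul_left]
            simp
        _ = C.det.natAbs := by rw [hgcdY, mul_one]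
    -- index facts
    have hΓidx : (LinearMap.range (A.submatrix id g).mulVecLin).toAddSubgroup.index
        = (A.submatrix id g).det.natAbs := index_range_mulVecLin _ hB
    have hLidx : (LinearMap.range A.mulVecLin).toAddSubgroup.index = C.det.natAbs := by
      rw [hLC]
      exact index_range_mulVecLin _ hdetC0
    set ρ := ((LinearMap.range (A.submatrix id g).mulVecLin).toAddSubgroup).relIndex
      (LinearMap.range A.mulVecLin).toAddSubgroup with hρd
    have hΓLadd : (LinearMap.range (A.submatrix id g).mulVecLin).toAddSubgroup
        ≤ (LinearMap.range A.mulVecLin).toAddSubgroup := fun x hx => hΓL hx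
    have hρmul : ρ * γn = (A.submatrix id g).det.natAbs := by
      rw [hρd, hγC, ← hLidx, ← hΓidx]
      exact AddSubgroup.relIndex_mul_index hΓLadd
    have hdBpos : 0 < (A.submatrix id g).det.natAbs := Int.natAbs_pos.mpr hB
    have hρ0 : ρ ≠ 0 := by
      intro h
      rw [h, zero_mul] at hρmul
      omega
    have hγpos : 0 < γn := by
      rw [hγC]
      exact Int.natAbs_pos.mpr hdetC0
    -- the chain of lattice points
    obtain ⟨c, hc0, hcz, hcmono, hcsum⟩ := chain_exists z hz
    have hT : (((∑ j, z j).toNat : ℕ) : ℤ) = ∑ j, z j :=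
      Int.toNat_of_nonneg (Finset.sum_nonneg fun j _ => hzj j)
    set T : ℕ := (∑ j, z j).toNat with hTd
    have hmemL : ∀ t : ℕ, A.mulVec (c t) ∈ (LinearMap.range A.mulVecLin).toAddSubgroup :=
      fun t => ⟨c t, rfl⟩
    set el : ℕ → ((LinearMap.range A.mulVecLin).toAddSubgroup : AddSubgroup (Fin m → ℤ)) :=
      fun t => ⟨A.mulVec (c t), hmemL t⟩ with held
    have key : ∀ t t' : ℕ, t < t' → (t' : ℤ) ≤ ∑ j, z j →
        (QuotientAddGroup.mk (el t) :
          (LinearMap.range A.mulVecLin).toAddSubgroup ⧸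
            ((LinearMap.range (A.submatrix id g).mulVecLin).toAddSubgroup.addSubgroupOf
              (LinearMap.range A.mulVecLin).toAddSubgroup))
          ≠ QuotientAddGroup.mk (el t') := by
      intro t t' htt' ht' heq
      rw [QuotientAddGroup.eq, AddSubgroup.mem_addSubgroupOf] at heq
      have hmem : A.mulVec (c t') - A.mulVec (c t)
          ∈ LinearMap.range (A.submatrix id g).mulVecLin := by
        have hco : ((-(el t) + el t' :
            ((LinearMap.range A.mulVecLin).toAddSubgroup : AddSubgroup (Fin m → ℤ))) :
              Fin m → ℤ) = A.mulVec (c t') - A.mulVec (c t) := by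
          rw [held]
          push_cast
          ring
        rw [← hco]
        exact heq
      have ht : (t : ℤ) ≤ ∑ j, z j := by
        have h1 : (t : ℤ) < (t' : ℤ) := by exact_mod_cast htt'
        linarith
      have h1 : 0 ≤ z - c t' + c t := by
        intro j
        have ha : c t' j ≤ z j := hcz t' j
        have hb : (0:ℤ) ≤ c t j := hc0 t j
        show (0:ℤ) ≤ z j - c t' j + c t j
        omega
      have h2 : z - c t' + c t ≤ z := by
        intro j
        have ha : c t j ≤ c t' j := hcmono t t' (le_of_lt htt') j
        show z j - c t' j + c t j ≤ z j
        omega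
      have h3 : z - c t' + c t ≠ z := by
        intro hw
        have hsz : ∑ j, (z - c t' + c t) j = ∑ j, z j := by rw [hw]
        simp only [Pi.add_apply, Pi.sub_apply, Finset.sum_add_distrib,
          Finset.sum_sub_distrib] at hsz
        rw [hcsum t ht, hcsum t' ht'] at hsz
        omega
      have h4 : A.mulVec (z - c t' + c t) - A.mulVec z
          ∈ LinearMap.range (A.submatrix id g).mulVecLin := by
        have heq2 : A.mulVec (z - c t' + c t) - A.mulVec z
            = -(A.mulVec (c t') - A.mulVec (c t)) := by
          rw [Matrix.mulVec_add, Matrix.mulVec_sub]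
          abel
        rw [heq2]
        exact neg_mem hmem
      exact hmin _ h1 h2 h3 h4
    have hcardQ : Nat.card ((LinearMap.range A.mulVecLin).toAddSubgroup ⧸
        ((LinearMap.range (A.submatrix id g).mulVecLin).toAddSubgroup.addSubgroupOf
          (LinearMap.range A.mulVecLin).toAddSubgroup)) = ρ := rfl
    haveI hfinQ : Finite ((LinearMap.range A.mulVecLin).toAddSubgroup ⧸
        ((LinearMap.range (A.submatrix id g).mulVecLin).toAddSubgroup.addSubgroupOf
          (LinearMap.range A.mulVecLin).toAddSubgroup)) :=
      Nat.finite_of_card_ne_zero (by rw [hcardQ]; exact hρ0)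
    have hleT : ∀ u : Fin (T+1), ((u : ℕ) : ℤ) ≤ ∑ j, z j := by
      intro u
      have h1 : ((u : ℕ) : ℤ) ≤ (T : ℤ) := by exact_mod_cast Nat.lt_succ_iff.mp u.isLt
      rw [hT] at h1
      exact h1
    have hinj2 : Function.Injective (fun t : Fin (T+1) =>
        (QuotientAddGroup.mk (el t.val) :
          (LinearMap.range A.mulVecLin).toAddSubgroup ⧸
            ((LinearMap.range (A.submatrix id g).mulVecLin).toAddSubgroup.addSubgroupOf
              (LinearMap.range A.mulVecLin).toAddSubgroup))) := by
      intro t t' h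
      rcases lt_trichotomy t.val t'.val with hlt | heqq | hgt
      · exact absurd h (key _ _ hlt (hleT t'))
      · exact Fin.ext heqq
      · exact absurd h.symm (key _ _ hgt (hleT t))
    have hcount : T + 1 ≤ ρ := by
      calc T + 1 = Nat.card (Fin (T+1)) := by simp
        _ ≤ _ := Nat.card_le_card_of_injective _ hinj2
        _ = ρ := hcardQ
    -- final numeric assembly over ℚ
    have hδB : (A.submatrix id g).det.natAbs ≤ δn := by
      rw [hδd]
      exact Finset.le_sup (f := fun g' : Fin m → Fin n =>
        (A.submatrix id g').det.natAbs) (Finset.mem_univ g)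
    have hZT : (∑ j, (z j : ℚ)) = (T : ℚ) := by
      have h1 : (∑ j, (z j : ℚ)) = ((∑ j, z j : ℤ) : ℚ) := by push_cast; rfl
      rw [h1, ← hT]
      push_cast
      rfl
    have hs_le : s ≤ (δn : ℚ) / (((A.submatrix id g).det.natAbs : ℕ) : ℚ) := by
      rw [hsdef]
      refine Finset.sup'_le _ _ fun p _ => ?_
      have habs : ∀ d : ℤ, |(d:ℚ)| = ((d.natAbs : ℕ) : ℚ) := fun d => by
        rw [Nat.cast_natAbs, Int.cast_abs]
      rw [hMent p.1 p.2, abs_div, habs, habs]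
      gcongr
      exact_mod_cast Finset.le_sup (f := fun g' : Fin m → Fin n =>
        (A.submatrix id g').det.natAbs) (Finset.mem_univ (Function.update g p.1 p.2))
    have hZlt : (T : ℚ) < (((A.submatrix id g).det.natAbs : ℕ) : ℚ) / (γn : ℚ) := by
      rw [lt_div_iff₀ (by exact_mod_cast hγpos)]
      have hnat : (T + 1) * γn ≤ (A.submatrix id g).det.natAbs := by
        calc (T+1) * γn ≤ ρ * γn := Nat.mul_le_mul_right _ hcount
          _ = _ := hρmul
      have h2 : T * γn < (A.submatrix id g).det.natAbs := by
        calc T * γn < T * γn + γn := by omega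
          _ = (T+1) * γn := by ring
          _ ≤ _ := hnat
      exact_mod_cast h2
    have hs0 : 0 ≤ s := by
      obtain ⟨p⟩ := (inferInstance : Nonempty (Fin m × Fin n))
      exact le_trans (abs_nonneg (M p.1 p.2))
        (Finset.le_sup' (fun p : Fin m × Fin n => |M p.1 p.2|) (Finset.mem_univ p))
    have hZ0 : 0 ≤ ∑ j, (z j:ℚ) := Finset.sum_nonneg fun j _ => hzq j
    have hδpos : (0:ℚ) < (δn:ℚ) := by exact_mod_cast lt_of_lt_of_le hdBpos hδB
    have hγq : (0:ℚ) < (γn:ℚ) := by exact_mod_cast hγpos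
    have hdBq : (0:ℚ) < (((A.submatrix id g).det.natAbs : ℕ) : ℚ) := by exact_mod_cast hdBpos
    rcases eq_or_lt_of_le hZ0 with hZ | hZ
    · rw [← hZ, mul_zero]
      exact div_pos hδpos hγq
    · calc s * ∑ j, (z j:ℚ)
          ≤ ((δn:ℚ)/(((A.submatrix id g).det.natAbs : ℕ) : ℚ)) * ∑ j, (z j:ℚ) :=
            mul_le_mul_of_nonneg_right hs_le hZ0
        _ < ((δn:ℚ)/(((A.submatrix id g).det.natAbs : ℕ) : ℚ)) *
              ((((A.submatrix id g).det.natAbs : ℕ) : ℚ)/(γn:ℚ)) := by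
            refine mul_lt_mul_of_pos_left ?_ (div_pos hδpos hdBq)
            rw [hZT]
            exact hZlt
        _ = (δn:ℚ)/(γn:ℚ) := by
            field_simp
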